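/- Let r be a rational number with 0 < r < 1. Then the following are equivalent: (i) there exist coprime integers A, M with 0 < A < M and a bijection assigning the three numbers 1/3, 1/5, r to the three numbers 1/M, A/M, (M−A)/M such that each of 1/3, 1/5, r is strictly less than its assigned value; (ii) r < 1/2. -/

import Mathlib

private lemma aux0 (r : ℚ) (A M : ℤ) (hA : 0 < A) (hAM : A < M)
    (h : r < 1 / (M : ℚ)) : r < 1 / 2 := by
  have hM2 : (2 : ℚ) ≤ (M : ℚ) := by exact_mod_cast (by omega : (2:ℤ) ≤ M)
  have := one_div_le_one_div_of_le (by norm_num : (0:ℚ) < 2) hM2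
  linarith

private lemma aux1 (A M : ℤ) (hA : 0 < A) (hAM : A < M)
    (h : (1 : ℚ)/3 < 1 / (M : ℚ)) : M = 2 ∧ A = 1 := by
  have hM3 : M < 3 := by
    by_contra hc
    push_neg at hc
    have h3 : (3 : ℚ) ≤ (M : ℚ) := by exact_mod_cast hc
    have := one_div_le_one_div_of_le (by norm_num : (0:ℚ) < 3) h3
    linarith
  omega

private lemma aux3 (r : ℚ) (A M : ℤ) (hA : 0 < A) (hAM : A < M) (hcop : IsCoprime A M)
    (h5 : (1 : ℚ)/5 < 1 / (M : ℚ)) (h3 : (1 : ℚ)/3 < (A : ℚ) / M)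
    (hr : r < ((M : ℚ) - A) / M) : r < 1 / 2 := by
  have hM5 : M < 5 := by
    by_contra hc
    push_neg at hc
    have h5' : (5 : ℚ) ≤ (M : ℚ) := by exact_mod_cast hc
    have := one_div_le_one_div_of_le (by norm_num : (0:ℚ) < 5) h5'
    linarith
  have hM2 : 2 ≤ M := by omega
  interval_cases M
  · -- M = 2
    have hA1 : A = 1 := by omega
    subst hA1
    norm_num at hr
    linarith
  · -- M = 3
    have hA' : (1 : ℚ) < (A : ℚ) := by linarith
    have : (1 : ℤ) < A := by exact_mod_cast hA'
    have hA2 : A = 2 := by omega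
    subst hA2
    norm_num at hr
    linarith
  · -- M = 4
    have hA' : (4 : ℚ) < 3 * (A : ℚ) := by linarith
    have h4 : (4 : ℤ) < 3 * A := by exact_mod_cast hA'
    have hA2 : 2 ≤ A := by omega
    have hA3 : A < 4 := by omega
    interval_cases A
    · exfalso
      rw [Int.isCoprime_iff_gcd_eq_one] at hcop
      norm_num at hcop
    · norm_num at hr
      linarith

theorem jn_criterion_multiplicity_two (r : ℚ) (hr0 : 0 < r) (hr1 : r < 1) :
    (∃ A M : ℤ, 0 < A ∧ A < M ∧ IsCoprime A M ∧
      ∃ σ : Equiv.Perm (Fin 3),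
        ∀ i : Fin 3,
          (![(1 : ℚ) / 3, 1 / 5, r]) i <
            (![(1 : ℚ) / M, (A : ℚ) / M, ((M : ℚ) - A) / M]) (σ i)) ↔ r < 1 / 2 := by
  constructor
  · rintro ⟨A, M, hA, hAM, hcop, σ, hσ⟩
    have h0 := hσ 0
    have h1 := hσ 1
    have h2 := hσ 2
    simp only [Fin.reduceFinMk, Matrix.cons_val_zero, Matrix.cons_val_one, Matrix.head_cons, Matrix.cons_val_two, Matrix.tail_cons] at h0 h1 h2
    obtain ⟨a, ha⟩ : ∃ a, σ 0 = a := ⟨_, rfl⟩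
    obtain ⟨b, hb⟩ : ∃ b, σ 1 = b := ⟨_, rfl⟩
    obtain ⟨c, hc⟩ : ∃ c, σ 2 = c := ⟨_, rfl⟩
    rw [ha] at h0
    rw [hb] at h1
    rw [hc] at h2
    have hcop' : IsCoprime (M - A) M := by
      have := (hcop.neg_left).add_mul_left_left 1
      simpa [sub_eq_neg_add, mul_one] using this
    fin_cases a <;> fin_cases b <;> fin_cases c <;>
      first
        | exact absurd (σ.injective (ha.trans hb.symm)) (by decide)
        | exact absurd (σ.injective (ha.trans hc.symm)) (by decide)
        | exact absurd (σ.injective (hb.trans hc.symm)) (by decide)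
        | skip
    -- remaining: (a,b,c) ∈ {(0,1,2),(0,2,1),(1,0,2),(1,2,0),(2,0,1),(2,1,0)}
    · -- (0,1,2): 1/3 < 1/M, r < (M-A)/M
      simp only [Fin.reduceFinMk, Matrix.cons_val_zero, Matrix.cons_val_one, Matrix.head_cons, Matrix.cons_val_two, Matrix.tail_cons] at h0 h1 h2
      obtain ⟨hM2, hA1⟩ := aux1 A M hA hAM h0
      subst hM2; subst hA1
      norm_num at h2
      linarith
    · -- (0,2,1): 1/3 < 1/M, r < A/M
      simp only [Fin.reduceFinMk, Matrix.cons_val_zero, Matrix.cons_val_one, Matrix.head_cons, Matrix.cons_val_two, Matrix.tail_cons] at h0 h1 h2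
      obtain ⟨hM2, hA1⟩ := aux1 A M hA hAM h0
      subst hM2; subst hA1
      norm_num at h2
      linarith
    · -- (1,0,2): 1/5 < 1/M, 1/3 < A/M, r < (M-A)/M
      simp only [Fin.reduceFinMk, Matrix.cons_val_zero, Matrix.cons_val_one, Matrix.head_cons, Matrix.cons_val_two, Matrix.tail_cons] at h0 h1 h2
      exact aux3 r A M hA hAM hcop h1 h0 h2
    · -- (1,2,0): r < 1/M
      simp only [Fin.reduceFinMk, Matrix.cons_val_zero, Matrix.cons_val_one, Matrix.head_cons, Matrix.cons_val_two, Matrix.tail_cons] at h0 h1 h2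
      exact aux0 r A M hA hAM h2
    · -- (2,0,1): 1/5 < 1/M, 1/3 < (M-A)/M, r < A/M
      simp only [Fin.reduceFinMk, Matrix.cons_val_zero, Matrix.cons_val_one, Matrix.head_cons, Matrix.cons_val_two, Matrix.tail_cons] at h0 h1 h2
      refine aux3 r (M - A) M (by omega) (by omega) hcop' h1 ?_ ?_
      · push_cast
        linarith
      · push_cast
        have heq : ((M : ℚ) - ((M : ℚ) - A)) / M = (A : ℚ) / M := by ring
        rw [heq]
        exact h2
    · -- (2,1,0): r < 1/M
      simp only [Fin.reduceFinMk, Matrix.cons_val_zero, Matrix.cons_val_one, Matrix.head_cons, Matrix.cons_val_two, Matrix.tail_cons] at h0 h1 h2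
      exact aux0 r A M hA hAM h2
  · intro hr
    refine ⟨1, 2, one_pos, one_lt_two, isCoprime_one_left, Equiv.refl _, ?_⟩
    intro i
    fin_cases i <;> push_cast <;> norm_num [Matrix.cons_val_two] <;> linarith
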